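/- Fix an integer l ≥ 1 and reals κ > 0 and σ_max > 0. There exist a constant C > 0 and N₀ such that for all integers N ≥ N₀ and all k = (k_1, …, k_{2l-1}) ∈ ℕ^{2l-1} with k_i ≤ σ_max √N for every i, setting Σ := Σ_{i=1}^{2l-1} k_i, one has | N^{(2l-1)/2} · (Σ + l + κ)/(N + κ)^{Σ + l} · ∏_{i=0}^{Σ-1}(N - l - i) − (Σ/√N) · exp(−Σ²/(2N)) | ≤ C/√N. -/

import Mathlib

open Finset

private lemma gauss_real (n : ℕ) : ∑ j ∈ Finset.range n, (j : ℝ) = ((n:ℝ)^2 - n) / 2 := by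
  induction n with
  | zero => simp
  | succ m ih =>
    rw [Finset.sum_range_succ, ih]
    push_cast
    ring

private lemma log_one_sub_ge {u : ℝ} (_h0 : 0 ≤ u) (h2 : u ≤ 1/2) :
    -u - 2*u^2 ≤ Real.log (1 - u) := by
  have hpos : (0:ℝ) < 1 - u := by linarith
  have h1 : Real.log (1-u)⁻¹ ≤ (1-u)⁻¹ - 1 :=
    Real.log_le_sub_one_of_pos (by positivity)
  rw [Real.log_inv] at h1
  have hv : (1-u) * (1-u)⁻¹ = 1 := mul_inv_cancel₀ hpos.ne'
  nlinarith [sq_nonneg u, inv_nonneg.mpr hpos.le]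

set_option maxHeartbeats 1000000 in
theorem stmt4 (l : ℕ) (hl : 1 ≤ l) (κ : ℝ) (hκ : 0 < κ)
    (σmax : ℝ) (hσ : 0 < σmax) :
    ∃ C > (0 : ℝ), ∃ N₀ : ℕ, ∀ N : ℕ, N₀ ≤ N →
      ∀ k : Fin (2 * l - 1) → ℕ, (∀ i, (k i : ℝ) ≤ σmax * Real.sqrt N) →
        |Real.sqrt N ^ (2 * l - 1) *
            (((∑ i, k i : ℕ) + l + κ) / ((N : ℝ) + κ) ^ ((∑ i, k i) + l) *
              ∏ j ∈ Finset.range (∑ i, k i), ((N : ℝ) - l - j)) -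
          ((∑ i, k i : ℕ) / Real.sqrt N) *
            Real.exp (-((∑ i, k i : ℕ) : ℝ) ^ 2 / (2 * N))|
        ≤ C / Real.sqrt N := by
  have hlR : (1:ℝ) ≤ (l:ℝ) := by exact_mod_cast hl
  set M : ℝ := (2*(l:ℝ)-1) * σmax with hMdef
  have h2l1 : (1:ℝ) ≤ 2*(l:ℝ)-1 := by linarith
  have hMpos : 0 < M := by rw [hMdef]; exact mul_pos (by linarith) hσ
  clear_value M
  set c : ℝ := M*(2*(l:ℝ)-1)/2 + 2*M*(1+M)^2 + (1+M)*κ with hcdef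
  have hcpos : 0 < c := by
    have t1 : 0 ≤ M*(2*(l:ℝ)-1)/2 := by positivity
    have t2 : 0 ≤ 2*M*(1+M)^2 := by positivity
    have t3 : 0 < (1+M)*κ := mul_pos (by linarith) hκ
    rw [hcdef]; linarith
  clear_value c
  set C : ℝ := 2*M*c + (l:ℝ) + κ with hCdef
  have hCpos : 0 < C := by
    rw [hCdef]; have := mul_pos hMpos hcpos; linarith
  clear_value C
  set T : ℝ := 2*(l:ℝ) + 2 + 4*M + c with hTdef
  have hTpos : 0 < T := by rw [hTdef]; linarith
  clear_value T
  refine ⟨C, hCpos, ⌈T^2⌉₊, ?_⟩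
  intro N hN k hk
  set S : ℕ := ∑ i, k i with hSdef
  set sN : ℝ := Real.sqrt N with hsNdef
  clear_value S
  have hsNnonneg : 0 ≤ sN := Real.sqrt_nonneg _
  have hTsN : T ≤ sN := by
    rw [hsNdef]
    refine (Real.le_sqrt hTpos.le (by positivity)).mpr ?_
    calc T^2 ≤ (⌈T^2⌉₊ : ℝ) := Nat.le_ceil _
    _ ≤ (N:ℝ) := by exact_mod_cast hN
  clear_value sN
  have hsNpos : 0 < sN := lt_of_lt_of_le hTpos hTsN
  have hN2 : (N:ℝ) = sN^2 := by
    rw [hsNdef]; exact (Real.sq_sqrt (Nat.cast_nonneg N)).symm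
  have hNpos : (0:ℝ) < N := by rw [hN2]; positivity
  -- bound on S
  have hSle : (S:ℝ) ≤ M * sN := by
    have h1 : (S:ℝ) = ∑ i, (k i : ℝ) := by rw [hSdef]; exact Nat.cast_sum _ _
    have h2 : ∑ i, (k i : ℝ) ≤ ∑ _i : Fin (2*l-1), σmax * sN :=
      Finset.sum_le_sum (fun i _ => hk i)
    have h3 : ∑ _i : Fin (2*l-1), σmax * sN = ((2*l-1 : ℕ):ℝ) * (σmax * sN) := by
      rw [Finset.sum_const, Finset.card_univ, Fintype.card_fin, nsmul_eq_mul]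
    have h4 : ((2*l-1 : ℕ):ℝ) = 2*(l:ℝ) - 1 := by
      have hll : 1 ≤ 2*l := by omega
      push_cast [hll]
      ring
    rw [h1]
    calc ∑ i, (k i : ℝ) ≤ ((2*l-1:ℕ):ℝ) * (σmax * sN) := by rw [← h3]; exact h2
    _ = M * sN := by rw [h4, hMdef]; ring
  have hlsN : (l:ℝ) ≤ sN := by
    have : (l:ℝ) ≤ T := by rw [hTdef]; linarith
    linarith
  have hSl : (S:ℝ) + l ≤ (M+1) * sN := by
    calc (S:ℝ) + l ≤ M*sN + sN := by linarith
    _ = (M+1)*sN := by ring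
  have hhalf : (M+1) * sN ≤ (N:ℝ)/2 := by
    have h1 : 2*(M+1) ≤ T := by rw [hTdef]; linarith
    rw [hN2]
    linarith [mul_le_mul_of_nonneg_right (show 2*(M+1) ≤ sN by linarith) hsNnonneg]
  -- factors positive
  have hfac : ∀ j ∈ Finset.range S, (0:ℝ) < (N:ℝ) - l - j := by
    intro j hj
    rw [Finset.mem_range] at hj
    have hj1 : (j:ℝ) < S := by exact_mod_cast hj
    have : (l:ℝ) + j < (S:ℝ) + l := by linarith
    linarith [hhalf, hSl, hNpos]
  have hu_half : ∀ j ∈ Finset.range S, ((l:ℝ)+j)/N ≤ 1/2 := by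
    intro j hj
    rw [Finset.mem_range] at hj
    have hjS : (j:ℝ) < S := by exact_mod_cast hj
    have h1 : (l:ℝ) + j ≤ (N:ℝ)/2 := by linarith [hhalf, hSl]
    rw [div_le_div_iff₀ hNpos (by norm_num : (0:ℝ) < 2)]
    linarith
  have hu_nonneg : ∀ j : ℕ, (0:ℝ) ≤ ((l:ℝ)+j)/N := by
    intro j; positivity
  set P : ℝ := ∏ j ∈ Finset.range S, ((N:ℝ) - l - j) with hPdef
  have hPpos : 0 < P := Finset.prod_pos hfac
  clear_value P
  have hDpos : (0:ℝ) < ((N:ℝ)+κ)^(S+l) := by positivity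
  set R : ℝ := (N:ℝ)^l * P / ((N:ℝ)+κ)^(S+l) with hRdef
  have hRpos : 0 < R := by rw [hRdef]; positivity
  clear_value R
  -- log identity
  have hlogR : Real.log R = (∑ j ∈ Finset.range S, Real.log (1 - ((l:ℝ)+j)/N))
      - ((S:ℝ)+l) * Real.log (1 + κ/N) := by
    have hfrac : ∀ j ∈ Finset.range S, (1:ℝ) - ((l:ℝ)+j)/N = ((N:ℝ) - l - j)/N := by
      intro j hj; field_simp; ring
    have hsum : ∑ j ∈ Finset.range S, Real.log (1 - ((l:ℝ)+j)/N)
        = (∑ j ∈ Finset.range S, Real.log ((N:ℝ) - l - j)) - S * Real.log N := by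
      rw [Finset.sum_congr rfl (fun j hj => by
        rw [hfrac j hj, Real.log_div (hfac j hj).ne' hNpos.ne'])]
      rw [Finset.sum_sub_distrib, Finset.sum_const, Finset.card_range, nsmul_eq_mul]
    have hkap : Real.log (1 + κ/N) = Real.log ((N:ℝ)+κ) - Real.log N := by
      rw [show (1:ℝ) + κ/N = ((N:ℝ)+κ)/N by field_simp,
        Real.log_div (by positivity) hNpos.ne']
    rw [hRdef, Real.log_div (by positivity) hDpos.ne',
      Real.log_mul (by positivity) hPpos.ne', Real.log_pow, Real.log_pow, hPdef,
      Real.log_prod (fun j hj => (hfac j hj).ne'), hsum, hkap]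
    push_cast
    ring
  -- sum computations
  have hsumu : ∑ j ∈ Finset.range S, ((l:ℝ)+j)/N = ((S:ℝ)*l + ((S:ℝ)^2 - S)/2)/N := by
    rw [← Finset.sum_div]
    congr 1
    rw [Finset.sum_add_distrib, Finset.sum_const, Finset.card_range, nsmul_eq_mul,
      gauss_real]
  have hsumsq : ∑ j ∈ Finset.range S, (((l:ℝ)+j)/N)^2 ≤ (S:ℝ) * ((M+1)/sN)^2 := by
    calc ∑ j ∈ Finset.range S, (((l:ℝ)+j)/N)^2
        ≤ ∑ _j ∈ Finset.range S, ((M+1)/sN)^2 := by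
          apply Finset.sum_le_sum
          intro j hj
          rw [Finset.mem_range] at hj
          have hjS : (j:ℝ) < S := by exact_mod_cast hj
          have h1 : (l:ℝ) + j ≤ (M+1)*sN := by linarith
          have h2 : ((l:ℝ)+j)/N ≤ (M+1)/sN := by
            rw [div_le_div_iff₀ hNpos hsNpos, hN2]
            linarith [mul_le_mul_of_nonneg_right h1 hsNnonneg]
          have h0 : (0:ℝ) ≤ ((l:ℝ)+j)/N := hu_nonneg j
          exact pow_le_pow_left₀ h0 h2 2
    _ = (S:ℝ) * ((M+1)/sN)^2 := by
        rw [Finset.sum_const, Finset.card_range, nsmul_eq_mul]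
  -- log bounds
  have hlog_up : ∑ j ∈ Finset.range S, Real.log (1 - ((l:ℝ)+j)/N)
      ≤ -∑ j ∈ Finset.range S, ((l:ℝ)+j)/N := by
    rw [← Finset.sum_neg_distrib]
    apply Finset.sum_le_sum
    intro j hj
    have h := Real.log_le_sub_one_of_pos (x := 1 - ((l:ℝ)+j)/N) (by linarith [hu_half j hj])
    linarith
  have hlog_lo : -∑ j ∈ Finset.range S, ((l:ℝ)+j)/N
        - 2*∑ j ∈ Finset.range S, (((l:ℝ)+j)/N)^2
      ≤ ∑ j ∈ Finset.range S, Real.log (1 - ((l:ℝ)+j)/N) := by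
    have h := Finset.sum_le_sum
      (fun j (hj : j ∈ Finset.range S) => log_one_sub_ge (hu_nonneg j) (hu_half j hj))
    have heq : ∑ j ∈ Finset.range S, (-(((l:ℝ)+j)/N) - 2*((((l:ℝ)+j)/N)^2))
        = -∑ j ∈ Finset.range S, ((l:ℝ)+j)/N
          - 2*∑ j ∈ Finset.range S, (((l:ℝ)+j)/N)^2 := by
      rw [Finset.sum_sub_distrib, Finset.sum_neg_distrib, ← Finset.mul_sum]
    rw [← heq]
    exact h
  have hkap_up : ((S:ℝ)+l) * Real.log (1 + κ/N) ≤ ((S:ℝ)+l) * (κ/N) := by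
    have h := Real.log_le_sub_one_of_pos (x := 1 + κ/N) (by positivity)
    have hSlnn : (0:ℝ) ≤ (S:ℝ)+l := by positivity
    nlinarith
  have hkap_lo : 0 ≤ ((S:ℝ)+l) * Real.log (1 + κ/N) := by
    apply mul_nonneg (by positivity)
    apply Real.log_nonneg
    have : 0 ≤ κ/N := by positivity
    linarith
  set x : ℝ := (S:ℝ)^2/(2*N) with hxdef
  have hxnonneg : 0 ≤ x := by rw [hxdef]; positivity
  clear_value x
  -- keep x body clearable later
  have hxA : x - ((S:ℝ)*l + ((S:ℝ)^2 - S)/2)/N = -((S:ℝ)*(2*(l:ℝ)-1)/(2*(N:ℝ))) := by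
    rw [hxdef]; field_simp; ring
  have hu1 : (S:ℝ)*(2*(l:ℝ)-1)/(2*(N:ℝ)) ≤ M*(2*(l:ℝ)-1)/2/sN := by
    rw [div_le_div_iff₀ (by positivity) hsNpos, hN2]
    linarith [mul_le_mul_of_nonneg_right hSle
      (mul_nonneg (show (0:ℝ) ≤ 2*(l:ℝ)-1 by linarith) hsNnonneg)]
  have hu2 : 2*((S:ℝ) * ((M+1)/sN)^2) ≤ 2*M*(1+M)^2/sN := by
    have h1 : ((M+1)/sN)^2 = (M+1)^2/sN^2 := by rw [div_pow]
    have h2 : 2*((S:ℝ) * ((M+1)^2/sN^2)) = (2*(S:ℝ)*(M+1)^2)/sN^2 := by ring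
    rw [h1, h2, div_le_div_iff₀ (by positivity) hsNpos]
    linarith [mul_le_mul_of_nonneg_right hSle
      (mul_nonneg (sq_nonneg (M+1)) hsNnonneg)]
  have hu3 : ((S:ℝ)+l)*(κ/N) ≤ (1+M)*κ/sN := by
    have h1 : ((S:ℝ)+l)*(κ/N) = (((S:ℝ)+l)*κ)/(N:ℝ) := by ring
    rw [h1, hN2, div_le_div_iff₀ (by positivity) hsNpos]
    linarith [mul_le_mul_of_nonneg_right hSl (mul_nonneg hκ.le hsNnonneg)]
  have hu1nn : 0 ≤ (S:ℝ)*(2*(l:ℝ)-1)/(2*(N:ℝ)) := by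
    apply div_nonneg _ (by positivity)
    apply mul_nonneg (Nat.cast_nonneg S)
    linarith
  have hδub : Real.log R + x ≤ 0 := by
    rw [hlogR]
    linarith [hlog_up, hkap_lo, hsumu, hxA, hu1nn]
  have hc_split : c/sN = M*(2*(l:ℝ)-1)/2/sN + 2*M*(1+M)^2/sN + (1+M)*κ/sN := by
    rw [hcdef]; ring
  have hδlb : -(c/sN) ≤ Real.log R + x := by
    rw [hlogR]
    linarith [hlog_lo, hkap_up, hsumu, hxA, hu1, hu2, hu3, hsumsq, hc_split]
  have hcsN : 0 ≤ c/sN := by positivity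
  have hδabs : |Real.log R + x| ≤ c/sN := abs_le.mpr ⟨hδlb, by linarith⟩
  have hδ1 : |Real.log R + x| ≤ 1 := by
    have h1 : c/sN ≤ 1 := by
      rw [div_le_one hsNpos]
      have hcT : c ≤ T := by rw [hTdef]; linarith
      linarith
    linarith
  have hRle1 : R ≤ 1 := by
    rw [← Real.exp_log hRpos, Real.exp_le_one_iff]
    linarith
  have hRx : R - Real.exp (-x) = Real.exp (-x) * (Real.exp (Real.log R + x) - 1) := by
    have h1 : Real.exp (-x) * Real.exp (Real.log R + x) = R := by
      rw [← Real.exp_add, show -x + (Real.log R + x) = Real.log R by ring]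
      exact Real.exp_log hRpos
    rw [mul_sub, h1, mul_one]
  have hcore : |((S:ℝ)+l+κ)*R - (S:ℝ)*Real.exp (-x)| ≤ C := by
    have hsplit : ((S:ℝ)+l+κ)*R - (S:ℝ)*Real.exp (-x)
        = (S:ℝ)*(R - Real.exp (-x)) + ((l:ℝ)+κ)*R := by ring
    have h1 : |(S:ℝ)*(R - Real.exp (-x))| ≤ 2*M*c := by
      rw [abs_mul, hRx, abs_mul, abs_of_nonneg (Real.exp_nonneg _),
        abs_of_nonneg (Nat.cast_nonneg S)]
      have hexp : Real.exp (-x) ≤ 1 := Real.exp_le_one_iff.mpr (by linarith)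
      have h2 : |Real.exp (Real.log R + x) - 1| ≤ 2*(c/sN) := by
        have := Real.abs_exp_sub_one_le hδ1
        linarith
      calc (S:ℝ) * (Real.exp (-x) * |Real.exp (Real.log R + x) - 1|)
          ≤ (S:ℝ) * (1 * (2*(c/sN))) := by
            apply mul_le_mul_of_nonneg_left _ (Nat.cast_nonneg S)
            exact mul_le_mul hexp h2 (abs_nonneg _) (by norm_num)
        _ = (S:ℝ) * (2*c) / sN := by ring
        _ ≤ 2*M*c := by
            rw [div_le_iff₀ hsNpos]
            linarith [mul_le_mul_of_nonneg_right hSle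
              (mul_nonneg (by norm_num : (0:ℝ) ≤ 2) hcpos.le)]
    have h3 : |((l:ℝ)+κ)*R| ≤ (l:ℝ)+κ := by
      rw [abs_mul, abs_of_nonneg (show (0:ℝ) ≤ (l:ℝ)+κ by positivity),
        abs_of_nonneg hRpos.le]
      linarith [mul_le_mul_of_nonneg_left hRle1
        (show (0:ℝ) ≤ (l:ℝ)+κ by positivity)]
    calc |((S:ℝ)+l+κ)*R - (S:ℝ)*Real.exp (-x)|
        ≤ |(S:ℝ)*(R - Real.exp (-x))| + |((l:ℝ)+κ)*R| := by
          rw [hsplit]; exact abs_add_le _ _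
      _ ≤ C := by rw [hCdef]; linarith
  -- final assembly
  have hpow : sN ^ (2*l-1) = (N:ℝ)^l / sN := by
    have h21 : 2*l - 1 + 1 = 2*l := by omega
    have h1 : sN ^ (2*l-1) * sN = (N:ℝ)^l := by
      rw [← pow_succ, h21, pow_mul, ← hN2]
    rw [eq_div_iff hsNpos.ne']
    exact h1
  have hexp_eq : -(S:ℝ)^2/(2*(N:ℝ)) = -x := by rw [hxdef]; ring
  have hE1 : sN ^ (2*l-1) * (((S:ℝ) + l + κ)/((N:ℝ)+κ)^(S+l) * P)
      = (((S:ℝ)+l+κ)*R)/sN := by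
    rw [hpow, hRdef]
    field_simp
  have hE2 : ((S:ℝ)/sN) * Real.exp (-(S:ℝ)^2/(2*(N:ℝ)))
      = ((S:ℝ)*Real.exp (-x))/sN := by
    rw [hexp_eq]; ring
  rw [hE1, hE2, div_sub_div_same, abs_div, abs_of_nonneg hsNnonneg]
  exact (div_le_div_iff_of_pos_right hsNpos).mpr hcore
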